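/- Let x lie in the open unit disk of ℝ² and v ∈ ℝ², v ≠ 0, so v·x_b(x,v) < 0. Then the reflected velocity map v¹(x,v) := R_{x_b(x,v)}·v is differentiable at (x,v), with Jacobians ∇_x v¹ = −2·A_{v, x_b(x,v)} and ∇_v v¹ = R_{x_b(x,v)} + 2·t_b(x,v)·A_{v, x_b(x,v)}. -/

import Mathlib

noncomputable section

open Matrix Real Set

/-- The Euclidean plane ℝ². -/
abbrev E : Type := EuclideanSpace ℝ (Fin 2)

/-- Dot product on ℝ². -/
def dot (a b : E) : ℝ := a 0 * b 0 + a 1 * b 1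

/-- Build a vector of ℝ² from its components. -/
def toE (f : Fin 2 → ℝ) : E := (WithLp.equiv 2 (Fin 2 → ℝ)).symm f

/-- Tensor (outer) product a⊗b, (a⊗b)_{ij} = aᵢ bⱼ. -/
def outer (a b : E) : Matrix (Fin 2) (Fin 2) ℝ := Matrix.of fun i j => a i * b j

/-- Matrix acting on a column vector. -/
def mulV (M : Matrix (Fin 2) (Fin 2) ℝ) (v : E) : E := toE fun i => M i 0 * v 0 + M i 1 * v 1

/-- Row vector multiplied by a matrix on the right. -/
def vMulM (w : E) (M : Matrix (Fin 2) (Fin 2) ℝ) : E := toE fun j => w 0 * M 0 j + w 1 * M 1 j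

/-- Specular reflection matrix R_n = I - 2 n⊗n. -/
def Rmat (n : E) : Matrix (Fin 2) (Fin 2) ℝ := 1 - (2 : ℝ) • outer n n

/-- The matrix A_{v,n} = ((v·n) I + n⊗v)(I - (v⊗n)/(v·n)). -/
def Amat (v n : E) : Matrix (Fin 2) (Fin 2) ℝ :=
  (dot v n • (1 : Matrix (Fin 2) (Fin 2) ℝ) + outer n v) *
    (1 - (dot v n)⁻¹ • outer v n)

/-- Counterclockwise rotation by π/2. -/
def Qmat : Matrix (Fin 2) (Fin 2) ℝ := !![0, -1; 1, 0]

/-- Backward exit time from the closed unit disk. -/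
def tb (x v : E) : ℝ := sSup {s : ℝ | 0 ≤ s ∧ ‖x - s • v‖ ≤ 1}

/-- Backward exit point from the closed unit disk. -/
def xb (x v : E) : E := x - tb x v • v

/-- The i-th column of a 2×2 matrix, as a vector of ℝ². -/
def colE (M : Matrix (Fin 2) (Fin 2) ℝ) (i : Fin 2) : E := toE fun k => M k i

/-- A 2×2 matrix as a continuous linear map ℝ² → ℝ². -/
def toCLM (M : Matrix (Fin 2) (Fin 2) ℝ) : E →L[ℝ] E :=
  LinearMap.toContinuousLinearMap (Matrix.toEuclideanLin M)

/- ===== auxiliary ===== -/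

lemma norm_sq_eq' (u : E) : ‖u‖ ^ 2 = dot u u := by
  rw [EuclideanSpace.norm_eq, Real.sq_sqrt (by positivity)]
  simp [dot, Fin.sum_univ_two, sq]

lemma dotvv_pos {v : E} (hv : v ≠ 0) : 0 < dot v v := by
  have h0 : (0:ℝ) < ‖v‖ := norm_pos_iff.2 hv
  have : 0 < ‖v‖ ^ 2 := by positivity
  rwa [norm_sq_eq'] at this

lemma dotxx_lt {x : E} (hx : ‖x‖ < 1) : dot x x < 1 := by
  have : ‖x‖ ^ 2 < 1 := by nlinarith [norm_nonneg x]
  rwa [norm_sq_eq'] at this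

lemma disc_pos {x v : E} (hx : ‖x‖ < 1) (hv : v ≠ 0) :
    0 < dot x v ^ 2 + dot v v * (1 - dot x x) := by
  nlinarith [dotvv_pos hv, dotxx_lt hx, sq_nonneg (dot x v)]

lemma tb_eq (x v : E) (hx : ‖x‖ < 1) (hv : v ≠ 0) :
    tb x v = (dot x v + Real.sqrt (dot x v ^ 2 + dot v v * (1 - dot x x))) * (dot v v)⁻¹ := by
  set d := dot x v with hd
  set A := dot v v with hA
  set c := dot x x with hc
  have hA0 : 0 < A := dotvv_pos hv
  have hc1 : c < 1 := dotxx_lt hx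
  have hdisc : 0 < d ^ 2 + A * (1 - c) := disc_pos hx hv
  set w := Real.sqrt (d ^ 2 + A * (1 - c)) with hw
  have hw2 : w ^ 2 = d ^ 2 + A * (1 - c) := Real.sq_sqrt hdisc.le
  have hw0 : 0 < w := Real.sqrt_pos.2 hdisc
  have hwd : |d| < w := by
    have := abs_nonneg d
    nlinarith [sq_abs d]
  have habs := abs_lt.1 hwd
  have hT0 : 0 ≤ (d + w) / A := div_nonneg (by linarith [habs.1]) hA0.le
  have hS : {s : ℝ | 0 ≤ s ∧ ‖x - s • v‖ ≤ 1} = Icc 0 ((d + w) / A) := by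
    ext s
    have hq : ‖x - s • v‖ ≤ 1 ↔ A * s ^ 2 - 2 * d * s + c ≤ 1 := by
      have h1 : ‖x - s • v‖ ^ 2 = A * s ^ 2 - 2 * d * s + c := by
        rw [norm_sq_eq']
        simp only [hd, dot, PiLp.sub_apply, PiLp.smul_apply, smul_eq_mul, hA, hc]
        ring
      constructor
      · intro h; nlinarith [norm_nonneg (x - s • v)]
      · intro h; nlinarith [norm_nonneg (x - s • v)]
    simp only [mem_setOf_eq, mem_Icc, hq]
    constructor
    · rintro ⟨hs0, hs1⟩
      refine ⟨hs0, ?_⟩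
      rw [le_div_iff₀ hA0]
      nlinarith [sq_nonneg (A * s - d)]
    · rintro ⟨hs0, hs1⟩
      rw [le_div_iff₀ hA0] at hs1
      refine ⟨hs0, ?_⟩
      nlinarith [mul_nonneg hs0 hA0.le]
  rw [tb, hS, csSup_Icc hT0, div_eq_mul_inv]

lemma xb_apply (x v : E) (i : Fin 2) : xb x v i = x i - tb x v * v i := by
  simp [xb]

lemma dot_v_xb (x v : E) (hx : ‖x‖ < 1) (hv : v ≠ 0) :
    dot v (xb x v) = -Real.sqrt (dot x v ^ 2 + dot v v * (1 - dot x x)) := by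
  have hA0 := dotvv_pos hv
  have hA0' : dot v v ≠ 0 := hA0.ne'
  have key : dot v (xb x v) = dot x v - tb x v * dot v v := by simp only [dot, xb_apply]; ring
  rw [key, tb_eq x v hx hv, inv_mul_cancel_right₀ hA0']
  ring

lemma dot_v_xb_neg (x v : E) (hx : ‖x‖ < 1) (hv : v ≠ 0) : dot v (xb x v) < 0 := by
  rw [dot_v_xb x v hx hv]
  simpa using Real.sqrt_pos.2 (disc_pos hx hv)

/- ===== continuous linear maps ===== -/

def P1 (i : Fin 2) : (E × E) →L[ℝ] ℝ :=
  (EuclideanSpace.proj i).comp (ContinuousLinearMap.fst ℝ E E)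
def P2 (i : Fin 2) : (E × E) →L[ℝ] ℝ :=
  (EuclideanSpace.proj i).comp (ContinuousLinearMap.snd ℝ E E)

def Lt (x v : E) : (E × E) →L[ℝ] ℝ :=
  (dot v (xb x v))⁻¹ •
    ((xb x v 0 • P1 0 + xb x v 1 • P1 1) - tb x v • (xb x v 0 • P2 0 + xb x v 1 • P2 1))

def Ly (x v : E) (i : Fin 2) : (E × E) →L[ℝ] ℝ :=
  P1 i - (tb x v • P2 i + v i • Lt x v)

def Lvy (x v : E) : (E × E) →L[ℝ] ℝ :=
  (v 0 • Ly x v 0 + xb x v 0 • P2 0) + (v 1 • Ly x v 1 + xb x v 1 • P2 1)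

def Lf (x v : E) (i : Fin 2) : (E × E) →L[ℝ] ℝ :=
  P2 i - (2 : ℝ) • (dot v (xb x v) • Ly x v i + xb x v i • Lvy x v)

def Ltot (x v : E) : (E × E) →L[ℝ] E :=
  ((PiLp.continuousLinearEquiv 2 ℝ (fun _ : Fin 2 => ℝ)).symm :
      (Fin 2 → ℝ) →L[ℝ] E).comp (ContinuousLinearMap.pi ![Lf x v 0, Lf x v 1])

/- ===== basic derivatives ===== -/

lemma hasF_x (x v : E) (i : Fin 2) :
    HasFDerivAt (fun p : E × E => p.1 i) (P1 i) (x, v) :=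
  ((EuclideanSpace.proj i : E →L[ℝ] ℝ).hasFDerivAt).comp (x, v) hasFDerivAt_fst

lemma hasF_v (x v : E) (i : Fin 2) :
    HasFDerivAt (fun p : E × E => p.2 i) (P2 i) (x, v) :=
  ((EuclideanSpace.proj i : E →L[ℝ] ℝ).hasFDerivAt).comp (x, v) hasFDerivAt_snd

lemma hasF_tb (x v : E) (hx : ‖x‖ < 1) (hv : v ≠ 0) :
    HasFDerivAt (fun p : E × E => tb p.1 p.2) (Lt x v) (x, v) := by
  have hA0 : 0 < dot v v := dotvv_pos hv
  have hdisc := disc_pos hx hv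
  -- raw chain rule
  have hd := ((hasF_x x v 0).mul (hasF_v x v 0)).add ((hasF_x x v 1).mul (hasF_v x v 1))
  have hA := ((hasF_v x v 0).mul (hasF_v x v 0)).add ((hasF_v x v 1).mul (hasF_v x v 1))
  have hc := ((hasF_x x v 0).mul (hasF_x x v 0)).add ((hasF_x x v 1).mul (hasF_x x v 1))
  have hdisc' := (hd.mul hd).add (hA.mul ((hasFDerivAt_const (1:ℝ) ((x,v) : E × E)).sub hc))
  have hw := hdisc'.sqrt (by simpa [dot, pow_two] using hdisc.ne')
  have hAinv := (hasDerivAt_inv (by simpa [dot] using hA0.ne')).comp_hasFDerivAt ((x,v) : E × E) hA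
  have hT := (hd.add hw).mul hAinv
  have heq : (fun p : E × E => tb p.1 p.2) =ᶠ[nhds ((x, v) : E × E)]
      (fun p : E × E =>
        (p.1 0 * p.2 0 + p.1 1 * p.2 1 +
            Real.sqrt ((p.1 0 * p.2 0 + p.1 1 * p.2 1) * (p.1 0 * p.2 0 + p.1 1 * p.2 1) +
              (p.2 0 * p.2 0 + p.2 1 * p.2 1) * (1 - (p.1 0 * p.1 0 + p.1 1 * p.1 1)))) *
          (p.2 0 * p.2 0 + p.2 1 * p.2 1)⁻¹) := by
    have hU : IsOpen {p : E × E | ‖p.1‖ < 1 ∧ p.2 ≠ 0} := by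
      refine (isOpen_lt (continuous_norm.comp continuous_fst) continuous_const).inter ?_
      exact isOpen_compl_singleton.preimage continuous_snd
    refine Filter.eventuallyEq_of_mem (hU.mem_nhds ⟨hx, hv⟩) (fun p hp => ?_)
    simpa [dot, pow_two] using tb_eq p.1 p.2 hp.1 hp.2
  refine ((hT.congr_of_eventuallyEq heq).congr_fderiv ?_)
  refine ContinuousLinearMap.ext fun u => ?_
  simp only [Lt, P1, P2, ContinuousLinearMap.add_apply, ContinuousLinearMap.smul_apply,
    ContinuousLinearMap.sub_apply, ContinuousLinearMap.coe_comp', Function.comp_apply,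
    ContinuousLinearMap.coe_fst', ContinuousLinearMap.coe_snd', PiLp.proj_apply,
    smul_eq_mul, ContinuousLinearMap.coe_smul', Pi.smul_apply, ContinuousLinearMap.zero_apply,
    Pi.mul_apply, Pi.add_apply, Pi.sub_apply, Pi.inv_apply]
  rw [dot_v_xb x v hx hv]
  simp only [xb_apply, tb_eq x v hx hv, dot]
  have hA0' : (0:ℝ) < v 0 * v 0 + v 1 * v 1 := by simpa [dot] using hA0
  have hdisc2 : (0:ℝ) < (x 0 * v 0 + x 1 * v 1) ^ 2 +
      (v 0 * v 0 + v 1 * v 1) * (1 - (x 0 * x 0 + x 1 * x 1)) := by simpa [dot] using hdisc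
  rw [show ((x 0 * v 0 + x 1 * v 1) * (x 0 * v 0 + x 1 * v 1) +
      (v 0 * v 0 + v 1 * v 1) * (1 - (x 0 * x 0 + x 1 * x 1))) = ((x 0 * v 0 + x 1 * v 1) ^ 2 +
      (v 0 * v 0 + v 1 * v 1) * (1 - (x 0 * x 0 + x 1 * x 1))) from by ring]
  set w := Real.sqrt ((x 0 * v 0 + x 1 * v 1) ^ 2 +
      (v 0 * v 0 + v 1 * v 1) * (1 - (x 0 * x 0 + x 1 * x 1))) with hwdef
  have hw2 : w ^ 2 = (x 0 * v 0 + x 1 * v 1) ^ 2 +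
      (v 0 * v 0 + v 1 * v 1) * (1 - (x 0 * x 0 + x 1 * x 1)) := Real.sq_sqrt hdisc2.le
  have hw0 : 0 < w := Real.sqrt_pos.2 hdisc2
  have hWi : w * w⁻¹ = 1 := mul_inv_cancel₀ hw0.ne'
  have hAi : (v 0 * v 0 + v 1 * v 1) * (v 0 * v 0 + v 1 * v 1)⁻¹ = 1 := mul_inv_cancel₀ hA0'.ne'
  rw [← inv_pow, inv_neg]
  linear_combination
    (-(x 0 * u.2 0 + v 0 * u.1 0 + x 1 * u.2 1 + v 1 * u.1 1) * (v 0 * v 0 + v 1 * v 1)⁻¹ +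
      2 * (v 0 * u.2 0 + v 1 * u.2 1) * (x 0 * v 0 + x 1 * v 1) * (v 0 * v 0 + v 1 * v 1)⁻¹ ^ 2 +
      2 * (v 0 * u.2 0 + v 1 * u.2 1) * w * (v 0 * v 0 + v 1 * v 1)⁻¹ ^ 2) * hWi +
    (-(x 0 * u.1 0 + x 1 * u.1 1) * w⁻¹ - (v 0 * u.2 0 + v 1 * u.2 1) * (v 0 * v 0 + v 1 * v 1)⁻¹ *
      w⁻¹ * (1 - (x 0 * x 0 + x 1 * x 1))) * hAi +
    (-(v 0 * u.2 0 + v 1 * u.2 1) * (v 0 * v 0 + v 1 * v 1)⁻¹ ^ 2 * w⁻¹) * hw2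

lemma hasF_y (x v : E) (hx : ‖x‖ < 1) (hv : v ≠ 0) (i : Fin 2) :
    HasFDerivAt (fun p : E × E => p.1 i - tb p.1 p.2 * p.2 i) (Ly x v i) (x, v) :=
  (hasF_x x v i).sub ((hasF_tb x v hx hv).mul (hasF_v x v i))

lemma hasF_vy (x v : E) (hx : ‖x‖ < 1) (hv : v ≠ 0) :
    HasFDerivAt
      (fun p : E × E =>
        p.2 0 * (p.1 0 - tb p.1 p.2 * p.2 0) + p.2 1 * (p.1 1 - tb p.1 p.2 * p.2 1))
      (Lvy x v) (x, v) := by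
  have h := ((hasF_v x v 0).mul (hasF_y x v hx hv 0)).add ((hasF_v x v 1).mul (hasF_y x v hx hv 1))
  refine h.congr_fderiv ?_
  simp only [Lvy, xb_apply]

lemma hasF_f (x v : E) (hx : ‖x‖ < 1) (hv : v ≠ 0) (i : Fin 2) :
    HasFDerivAt
      (fun p : E × E =>
        p.2 i - 2 * ((p.2 0 * (p.1 0 - tb p.1 p.2 * p.2 0) +
          p.2 1 * (p.1 1 - tb p.1 p.2 * p.2 1)) * (p.1 i - tb p.1 p.2 * p.2 i)))
      (Lf x v i) (x, v) := by
  have h := (hasF_v x v i).sub (((hasF_vy x v hx hv).mul (hasF_y x v hx hv i)).const_mul 2)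
  refine h.congr_fderiv ?_
  simp only [Lf, xb_apply, dot]

lemma hasF_main (x v : E) (hx : ‖x‖ < 1) (hv : v ≠ 0) :
    HasFDerivAt (fun p : E × E => mulV (Rmat (xb p.1 p.2)) p.2) (Ltot x v) (x, v) := by
  have hG : HasFDerivAt
      (fun (p : E × E) (i : Fin 2) =>
        ![fun p : E × E =>
            p.2 0 - 2 * ((p.2 0 * (p.1 0 - tb p.1 p.2 * p.2 0) +
              p.2 1 * (p.1 1 - tb p.1 p.2 * p.2 1)) * (p.1 0 - tb p.1 p.2 * p.2 0)),
          fun p : E × E =>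
            p.2 1 - 2 * ((p.2 0 * (p.1 0 - tb p.1 p.2 * p.2 0) +
              p.2 1 * (p.1 1 - tb p.1 p.2 * p.2 1)) * (p.1 1 - tb p.1 p.2 * p.2 1))] i p)
      (ContinuousLinearMap.pi ![Lf x v 0, Lf x v 1]) (x, v) := by
    refine hasFDerivAt_pi.2 (fun i => ?_)
    fin_cases i
    · simpa using hasF_f x v hx hv 0
    · simpa using hasF_f x v hx hv 1
  have h := (((PiLp.continuousLinearEquiv 2 ℝ (fun _ : Fin 2 => ℝ)).symm :
      (Fin 2 → ℝ) →L[ℝ] E).hasFDerivAt).comp ((x, v) : E × E) hG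
  refine h.congr_of_eventuallyEq (Filter.Eventually.of_forall fun p => ?_)
  show mulV (Rmat (xb p.1 p.2)) p.2 = _
  refine PiLp.ext fun i => ?_
  fin_cases i <;>
    simp [mulV, toE, Rmat, outer, Matrix.one_fin_two, xb_apply, mul_comm, mul_assoc, mul_left_comm] <;>
    ring

set_option maxHeartbeats 2000000 in
theorem stmt17 (x v : E) (hx : ‖x‖ < 1) (hv : v ≠ 0) :
    dot v (xb x v) < 0 ∧
    DifferentiableAt ℝ (fun p : E × E => mulV (Rmat (xb p.1 p.2)) p.2) (x, v) ∧
    HasFDerivAt (fun y => mulV (Rmat (xb y v)) v)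
      (toCLM ((-2 : ℝ) • Amat v (xb x v))) x ∧
    HasFDerivAt (fun w => mulV (Rmat (xb x w)) w)
      (toCLM (Rmat (xb x v) + (2 * tb x v) • Amat v (xb x v))) v := by
  have hmain := hasF_main x v hx hv
  have hvy0 : dot v (xb x v) ≠ 0 := (dot_v_xb_neg x v hx hv).ne
  refine ⟨dot_v_xb_neg x v hx hv, hmain.differentiableAt, ?_, ?_⟩
  · have h := hmain.comp x (hasFDerivAt_prodMk_left (𝕜 := ℝ) x v)
    refine (h.congr_fderiv ?_).congr_of_eventuallyEq (Filter.Eventually.of_forall fun y => rfl)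
    refine ContinuousLinearMap.ext fun u => ?_
    refine PiLp.ext fun i => ?_
    fin_cases i <;>
    · simp only [toCLM, Ltot, Lf, Lvy, Ly, Lt, P1, P2, LinearMap.coe_toContinuousLinearMap',
        Matrix.toEuclideanLin_apply, WithLp.equiv_symm_apply, PiLp.toLp_apply, Matrix.mulVec, dotProduct,
        Fin.sum_univ_two, Amat, Rmat, outer, Matrix.mul_apply,
        Matrix.smul_apply, Matrix.add_apply, Matrix.sub_apply, Matrix.one_fin_two, Matrix.of_apply,
        Matrix.cons_val', Matrix.cons_val_zero, Matrix.cons_val_one, Matrix.head_cons,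
        Matrix.head_fin_const, Matrix.empty_val', Matrix.cons_val_fin_one,
        ContinuousLinearMap.coe_comp', Function.comp_apply, ContinuousLinearMap.inl_apply,
        ContinuousLinearMap.coe_pi', ContinuousLinearMap.add_apply, ContinuousLinearMap.sub_apply,
        ContinuousLinearMap.smul_apply, ContinuousLinearMap.coe_fst', ContinuousLinearMap.coe_snd',
        PiLp.proj_apply, smul_eq_mul, ContinuousLinearMap.coe_smul', Pi.smul_apply,
        ContinuousLinearMap.zero_apply, ContinuousLinearEquiv.coe_coe,
        PiLp.continuousLinearEquiv_symm_apply, PiLp.zero_apply, ContinuousLinearMap.pi_apply,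
        Fin.mk_zero, Fin.mk_one, Fin.isValue, Prod.fst, Prod.snd]
      field_simp
      ring
  · have h := hmain.comp v (hasFDerivAt_prodMk_right (𝕜 := ℝ) x v)
    refine (h.congr_fderiv ?_).congr_of_eventuallyEq (Filter.Eventually.of_forall fun w => rfl)
    refine ContinuousLinearMap.ext fun u => ?_
    refine PiLp.ext fun i => ?_
    fin_cases i <;>
    · simp only [toCLM, Ltot, Lf, Lvy, Ly, Lt, P1, P2, LinearMap.coe_toContinuousLinearMap',
        Matrix.toEuclideanLin_apply, WithLp.equiv_symm_apply, PiLp.toLp_apply, Matrix.mulVec, dotProduct,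
        Fin.sum_univ_two, Amat, Rmat, outer, Matrix.mul_apply,
        Matrix.smul_apply, Matrix.add_apply, Matrix.sub_apply, Matrix.one_fin_two, Matrix.of_apply,
        Matrix.cons_val', Matrix.cons_val_zero, Matrix.cons_val_one, Matrix.head_cons,
        Matrix.head_fin_const, Matrix.empty_val', Matrix.cons_val_fin_one,
        ContinuousLinearMap.coe_comp', Function.comp_apply, ContinuousLinearMap.inr_apply,
        ContinuousLinearMap.coe_pi', ContinuousLinearMap.add_apply, ContinuousLinearMap.sub_apply,
        ContinuousLinearMap.smul_apply, ContinuousLinearMap.coe_fst', ContinuousLinearMap.coe_snd',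
        PiLp.proj_apply, smul_eq_mul, ContinuousLinearMap.coe_smul', Pi.smul_apply,
        ContinuousLinearMap.zero_apply, ContinuousLinearEquiv.coe_coe,
        PiLp.continuousLinearEquiv_symm_apply, PiLp.zero_apply, ContinuousLinearMap.pi_apply,
        Fin.mk_zero, Fin.mk_one, Fin.isValue, Prod.fst, Prod.snd]
      field_simp
      ring
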